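/- Let p > q be primes with p ≡ 1 (mod q) and C the cyclic group of order pq. All the regular subgroups G_b = ⟨σ, τ^b α⟩ (1 ≤ b ≤ q-1) of Hol(C) are conjugate to each other under the action of Aut(C) by conjugation inside Hol(C). Consequently there is exactly one non-trivial skew brace with additive group cyclic of order pq. -/

import Mathlib

/-- `(op, e, inv)` is a group structure on `A`. -/
def IsGroupOp {A : Type*} (op : A → A → A) (e : A) (inv : A → A) : Prop :=
  (∀ a b c, op (op a b) c = op a (op b c)) ∧ (∀ a, op e a = a) ∧ (∀ a, op a e = a) ∧
  (∀ a, op (inv a) a = e) ∧ (∀ a, op a (inv a) = e)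

/-- `(A, add, mul)` is a skew left brace. -/
def IsSkewBrace {A : Type*} (add : A → A → A) (zero : A) (neg : A → A)
    (mul : A → A → A) (one : A) (inv : A → A) : Prop :=
  IsGroupOp add zero neg ∧ IsGroupOp mul one inv ∧
  ∀ a b c, mul a (add b c) = add (add (mul a b) (neg a)) (mul a c)

/-- The subgroup `G_b = ⟨σ, τ^b α⟩` of `Hol(C) ≤ Perm(C)`, `C = ℤ_p × ℤ_q`, where
`σ, τ` are the translations by `(1,0), (0,1)` and `α(n,m) = (g·n, m)`. -/
def Gb (p q : ℕ) (g : (ZMod p)ˣ) (b : ℕ) : Subgroup (Equiv.Perm (ZMod p × ZMod q)) :=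
  Subgroup.closure
    {Equiv.addLeft ((1, 0) : ZMod p × ZMod q),
      (Equiv.addLeft ((0, 1) : ZMod p × ZMod q)) ^ b *
        Equiv.prodCongr (Units.mulLeft g) (Equiv.refl (ZMod q))}

structure BG (A : Type*) where mk' :: val : A

lemma addLeft_pow {A : Type*} [AddGroup A] (v : A) (n : ℕ) :
    (Equiv.addLeft v) ^ n = Equiv.addLeft (n • v) := by
  induction n with
  | zero => ext x; simp
  | succ k ih => ext x; simp [pow_succ, ih, succ_nsmul, add_assoc]


lemma classify (p q : ℕ) (hp : p.Prime) (hq : q.Prime) (hlt : q < p) (hmod : p % q = 1)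
    {mul : ZMod p × ZMod q → ZMod p × ZMod q → ZMod p × ZMod q} {one : ZMod p × ZMod q}
    {inv : ZMod p × ZMod q → ZMod p × ZMod q}
    (hsb : IsSkewBrace (· + ·) 0 (- ·) mul one inv) :
    ∃ H : ZMod q → (ZMod p)ˣ, H 0 = 1 ∧ (∀ m m', H (m + m') = H m * H m') ∧
      (∀ m, (H m) ^ q = 1) ∧
      ∀ a b, mul a b = (a.1 + (H a.2 : ZMod p) * b.1, a.2 + b.2) := by
  haveI : Fact p.Prime := ⟨hp⟩
  haveI : Fact q.Prime := ⟨hq⟩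
  obtain ⟨-, ⟨massoc, monel, moner, minvl, minvr⟩, hcompat⟩ := hsb
  -- `a ∘ 0 = a` and `one = 0`
  have h0 : ∀ a, mul a 0 = a := by
    intro a
    have h := hcompat a 0 0
    simp only [add_zero] at h
    linear_combination -h
  have hone : one = 0 := by rw [← h0 one, monel]
  have hmul0 : ∀ b, mul 0 b = b := fun b => by rw [← hone]; exact monel b
  -- the lambda maps
  set lam : ZMod p × ZMod q → ZMod p × ZMod q → ZMod p × ZMod q :=
    fun a b => -a + mul a b with hlam
  have lam_def : ∀ a b, mul a b = a + lam a b := fun a b => by simp [hlam]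
  have lam_add : ∀ a b c, lam a (b + c) = lam a b + lam a c := by
    intro a b c
    simp only [hlam, hcompat a b c]
    ring
  have lam_hom : ∀ a b c, lam (mul a b) c = lam a (lam b c) := by
    intro a b c
    have h2 : mul a (mul b c) = mul a b + -a + mul a (lam b c) := by
      conv_lhs => rw [lam_def b c]
      have := hcompat a b (lam b c)
      rw [this]
    simp only [hlam, massoc a b c, h2]; ring
  have lam_zero' : ∀ b, lam 0 b = b := fun b => by simp [hlam, hmul0]
  -- lambda as additive homs
  have lamH : ∀ a, ∃ f : (ZMod p × ZMod q) →+ (ZMod p × ZMod q), ⇑f = lam a :=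
    fun a => ⟨AddMonoidHom.mk' (lam a) (lam_add a), rfl⟩
  -- scaling structure of each `lam a`
  set s : ZMod p × ZMod q → ZMod p := fun a => (lam a (1, 0)).1 with hs
  set t : ZMod p × ZMod q → ZMod q := fun a => (lam a (0, 1)).2 with ht
  have hqp : ((q : ZMod p)) ≠ 0 := fun h =>
    Nat.not_dvd_of_pos_of_lt hq.pos hlt ((ZMod.natCast_eq_zero_iff q p).mp h)
  have hpq : ((p : ZMod q)) ≠ 0 := by
    intro h
    rcases (Nat.prime_dvd_prime_iff_eq hq hp).mp
      ((ZMod.natCast_eq_zero_iff p q).mp h) with rfl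
    exact lt_irrefl _ hlt
  have key2 : ∀ a, (lam a ((1 : ZMod p), (0 : ZMod q))).2 = 0 := by
    intro a
    obtain ⟨f, hf⟩ := lamH a
    have h1 : (p : ℕ) • (((1 : ZMod p), (0 : ZMod q))) = 0 := by
      ext <;> simp [nsmul_eq_mul]
    have h2 : (p : ℕ) • lam a (1, 0) = 0 := by
      rw [← hf, ← map_nsmul, h1, map_zero]
    have h3 : (p : ZMod q) * (lam a (1, 0)).2 = 0 := by
      have := congrArg Prod.snd h2
      simpa [nsmul_eq_mul] using this
    exact (mul_eq_zero.mp h3).resolve_left hpq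
  have key1 : ∀ a, (lam a ((0 : ZMod p), (1 : ZMod q))).1 = 0 := by
    intro a
    obtain ⟨f, hf⟩ := lamH a
    have h1 : (q : ℕ) • (((0 : ZMod p), (1 : ZMod q))) = 0 := by
      ext <;> simp [nsmul_eq_mul]
    have h2 : (q : ℕ) • lam a (0, 1) = 0 := by
      rw [← hf, ← map_nsmul, h1, map_zero]
    have h3 : (q : ZMod p) * (lam a (0, 1)).1 = 0 := by
      have := congrArg Prod.fst h2
      simpa [nsmul_eq_mul] using this
    exact (mul_eq_zero.mp h3).resolve_left hqp
  have scaling : ∀ a x y, lam a (x, y) = (s a * x, t a * y) := by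
    intro a x y
    obtain ⟨f, hf⟩ := lamH a
    have hx : ((x, (0 : ZMod q)) : ZMod p × ZMod q) = x.val • ((1 : ZMod p), (0 : ZMod q)) := by
      ext <;> simp [nsmul_eq_mul, ZMod.natCast_val, ZMod.cast_id]
    have hy : (((0 : ZMod p), y) : ZMod p × ZMod q) = y.val • ((0 : ZMod p), (1 : ZMod q)) := by
      ext <;> simp [nsmul_eq_mul, ZMod.natCast_val, ZMod.cast_id]
    have hsplit : ((x, y) : ZMod p × ZMod q) = (x, 0) + (0, y) := by ext <;> simp
    rw [hsplit, lam_add, ← hf, hx, hy, map_nsmul, map_nsmul, hf]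
    ext
    · simp [nsmul_eq_mul, key1, hs, ZMod.natCast_val, ZMod.cast_id, mul_comm]
    · simp [nsmul_eq_mul, key2, ht, ZMod.natCast_val, ZMod.cast_id, mul_comm]
  -- multiplicativity of s and t
  have lam_one0 : ∀ a, lam a (1, 0) = (s a, 0) := by
    intro a; rw [show ((1,0) : ZMod p × ZMod q) = ((1 : ZMod p), (0 : ZMod q)) from rfl,
      scaling]; simp
  have lam_01 : ∀ a, lam a (0, 1) = (0, t a) := by
    intro a; rw [show ((0,1) : ZMod p × ZMod q) = ((0 : ZMod p), (1 : ZMod q)) from rfl,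
      scaling]; simp
  have s_hom : ∀ a b, s (mul a b) = s a * s b := by
    intro a b
    have h := lam_hom a b (1, 0)
    rw [lam_one0, lam_one0 b] at h
    have h2 : lam a ((s b : ZMod p), (0 : ZMod q)) = (s a * s b, 0) := by
      rw [scaling]; simp [mul_comm]
    rw [h2] at h
    have := congrArg Prod.fst h
    simpa [hs] using this
  have t_hom : ∀ a b, t (mul a b) = t a * t b := by
    intro a b
    have h := lam_hom a b (0, 1)
    rw [lam_01, lam_01 b] at h
    have h2 : lam a ((0 : ZMod p), (t b : ZMod q)) = (0, t a * t b) := by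
      rw [scaling]; simp [mul_comm]
    rw [h2] at h
    have := congrArg Prod.snd h
    simpa [ht] using this
  have s_zero : s 0 = 1 := by simp [hs, lam_zero']
  have t_zero : t 0 = 1 := by simp [ht, lam_zero']
  have s_inv : ∀ a, s a * s (inv a) = 1 := by
    intro a; rw [← s_hom, minvr, hone, s_zero]
  have t_inv : ∀ a, t a * t (inv a) = 1 := by
    intro a; rw [← t_hom, minvr, hone, t_zero]
  have s_ne : ∀ a, s a ≠ 0 := fun a h => by
    have := s_inv a; rw [h, zero_mul] at this; exact zero_ne_one this
  have t_ne : ∀ a, t a ≠ 0 := fun a h => by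
    have := t_inv a; rw [h, zero_mul] at this; exact zero_ne_one this
  -- the multiplicative group as a `Group`
  letI : Group (BG (ZMod p × ZMod q)) :=
  { mul := fun x y => ⟨mul x.val y.val⟩
    one := ⟨one⟩
    inv := fun x => ⟨inv x.val⟩
    mul_assoc := fun a b c => congrArg BG.mk' (massoc a.val b.val c.val)
    one_mul := fun a => congrArg BG.mk' (monel a.val)
    mul_one := fun a => congrArg BG.mk' (moner a.val)
    inv_mul_cancel := fun a => congrArg BG.mk' (minvl a.val) }
  letI : Fintype (BG (ZMod p × ZMod q)) :=
    Fintype.ofEquiv _ ⟨BG.mk', BG.val, fun _ => rfl, fun _ => rfl⟩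
  have hcard : Fintype.card (BG (ZMod p × ZMod q)) = p * q := by
    rw [Fintype.card_congr ⟨BG.val, BG.mk', fun _ => rfl, fun _ => rfl⟩]
    simp [ZMod.card]
  -- the hom into the units of `ZMod q` is trivial
  have t_one : t one = 1 := by rw [hone, t_zero]
  have s_one : s one = 1 := by rw [hone, s_zero]
  set Tm : BG (ZMod p × ZMod q) →* (ZMod q)ˣ :=
    { toFun := fun x => Units.mk0 (t x.val) (t_ne x.val)
      map_one' := by ext; exact t_one
      map_mul' := fun x y => by ext; exact t_hom x.val y.val } with hTm
  set Sm : BG (ZMod p × ZMod q) →* (ZMod p)ˣ :=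
    { toFun := fun x => Units.mk0 (s x.val) (s_ne x.val)
      map_one' := by ext; exact s_one
      map_mul' := fun x y => by ext; exact s_hom x.val y.val } with hSm
  have hq2 : 2 ≤ q := hq.two_le
  have hT1 : ∀ x : BG (ZMod p × ZMod q), Tm x = 1 := by
    intro x
    have h1 : orderOf (Tm x) ∣ p * q :=
      dvd_trans (orderOf_map_dvd Tm x) (by rw [← hcard]; exact orderOf_dvd_card)
    have h2 : orderOf (Tm x) ∣ q - 1 := by
      have := (orderOf_dvd_card : orderOf (Tm x) ∣ Fintype.card (ZMod q)ˣ)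
      rwa [ZMod.card_units] at this
    have hcop : Nat.Coprime (p * q) (q - 1) := by
      refine Nat.Coprime.mul
        ((hp.coprime_iff_not_dvd).mpr (Nat.not_dvd_of_pos_of_lt (by omega) (by omega)))
        ?_
      rcases eq_or_lt_of_le hq2 with h2 | h2
      · rw [← h2]; decide
      · exact (hq.coprime_iff_not_dvd).mpr (Nat.not_dvd_of_pos_of_lt (by omega) (by omega))
    have := Nat.eq_one_of_dvd_coprimes hcop h1 h2
    exact orderOf_eq_one_iff.mp this
  have t_triv : ∀ a, t a = 1 := by
    intro a
    have := hT1 ⟨a⟩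
    have h2 := congrArg Units.val this
    simpa [hTm] using h2
  -- second coordinate of mul is addition
  have mul_snd : ∀ a b, (mul a b).2 = a.2 + b.2 := by
    intro a b
    rw [lam_def a b]
    have : lam a b = (s a * b.1, b.2) := by
      rw [show b = (b.1, b.2) from rfl, scaling, t_triv, one_mul]
    rw [this]
    simp
  -- s is trivial on the kernel of the projection to `ZMod q`
  set pi : BG (ZMod p × ZMod q) →* Multiplicative (ZMod q) :=
    { toFun := fun x => Multiplicative.ofAdd x.val.2
      map_one' := by
        show Multiplicative.ofAdd (one).2 = 1
        rw [hone]; rfl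
      map_mul' := fun x y => by
        show Multiplicative.ofAdd (mul x.val y.val).2 = _
        rw [mul_snd]; rfl } with hpi
  have hKcard : Nat.card pi.ker = p := by
    have e : pi.ker ≃ ZMod p :=
      { toFun := fun x => x.1.val.1
        invFun := fun n => ⟨⟨(n, 0)⟩, by
          show Multiplicative.ofAdd ((0 : ZMod q)) = 1
          rfl⟩
        left_inv := fun x => by
          obtain ⟨⟨⟨n, m⟩⟩, hx⟩ := x
          have hm : m = 0 := by
            have : Multiplicative.ofAdd m = 1 := hx
            simpa using congrArg Multiplicative.toAdd this
          subst hm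
          rfl
        right_inv := fun n => rfl }
    rw [Nat.card_congr e]
    simp [Nat.card_eq_fintype_card, ZMod.card]
  have s_fst_triv : ∀ n : ZMod p, s (n, 0) = 1 := by
    intro n
    set x : BG (ZMod p × ZMod q) := ⟨(n, 0)⟩ with hx
    have hxk : x ∈ pi.ker := by
      show Multiplicative.ofAdd ((0 : ZMod q)) = 1
      rfl
    have h1 : orderOf x ∣ p := by
      have h := orderOf_dvd_natCard (⟨x, hxk⟩ : pi.ker)
      rw [hKcard] at h
      have e : orderOf x = orderOf (⟨x, hxk⟩ : pi.ker) :=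
        Subgroup.orderOf_coe (⟨x, hxk⟩ : pi.ker)
      rw [e]; exact h
    have h2 : orderOf (Sm x) ∣ p := dvd_trans (orderOf_map_dvd Sm x) h1
    have h3 : orderOf (Sm x) ∣ p - 1 := by
      have := (orderOf_dvd_card : orderOf (Sm x) ∣ Fintype.card (ZMod p)ˣ)
      rwa [ZMod.card_units] at this
    have hcop : Nat.Coprime p (p - 1) :=
      (hp.coprime_iff_not_dvd).mpr (Nat.not_dvd_of_pos_of_lt (by omega) (by omega))
    have : Sm x = 1 := orderOf_eq_one_iff.mp (Nat.eq_one_of_dvd_coprimes hcop h2 h3)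
    have h4 := congrArg Units.val this
    simpa [hSm] using h4
  -- s only depends on the second coordinate
  have s_snd : ∀ a : ZMod p × ZMod q, s a = s (0, a.2) := by
    intro a
    have hdec : mul ((a.1, 0) : ZMod p × ZMod q) ((0, a.2) : ZMod p × ZMod q) = a := by
      rw [lam_def, scaling]
      simp [t_triv]
    calc s a = s (mul (a.1, 0) (0, a.2)) := by rw [hdec]
    _ = s ((a.1, 0) : ZMod p × ZMod q) * s ((0, a.2) : ZMod p × ZMod q) := s_hom _ _
    _ = s (0, a.2) := by rw [s_fst_triv, one_mul]
  -- s^q = 1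
  have s_pow : ∀ a, s a ^ q = 1 := by
    intro a
    have h1 : orderOf (Sm ⟨a⟩) ∣ p * q :=
      dvd_trans (orderOf_map_dvd Sm ⟨a⟩) (by rw [← hcard]; exact orderOf_dvd_card)
    have h3 : orderOf (Sm ⟨a⟩) ∣ p - 1 := by
      have := (orderOf_dvd_card : orderOf (Sm ⟨a⟩) ∣ Fintype.card (ZMod p)ˣ)
      rwa [ZMod.card_units] at this
    have hdvd : orderOf (Sm ⟨a⟩) ∣ q := by
      have hgcd : Nat.gcd (p * q) (p - 1) = q := by
        have hcop : Nat.Coprime p (p - 1) :=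
          (hp.coprime_iff_not_dvd).mpr (Nat.not_dvd_of_pos_of_lt (by omega) (by omega))
        exact (Nat.Coprime.gcd_mul_left_cancel q hcop).trans
          (Nat.gcd_eq_left ⟨p / q, by have := Nat.div_add_mod p q; omega⟩)
      have hh := Nat.dvd_gcd h1 h3
      rwa [hgcd] at hh
    have h4 : Sm ⟨a⟩ ^ q = 1 := orderOf_dvd_iff_pow_eq_one.mp hdvd
    have h5 := congrArg Units.val h4
    simpa [hSm] using h5
  -- final assembly
  refine ⟨fun m => Units.mk0 (s (0, m)) (s_ne _), ?_, ?_, ?_, ?_⟩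
  · ext; exact s_zero
  · intro m m'
    ext
    have hdec : mul ((0, m) : ZMod p × ZMod q) ((0, m') : ZMod p × ZMod q) = (0, m + m') := by
      rw [lam_def, scaling]; simp [t_triv]
    have := s_hom ((0, m) : ZMod p × ZMod q) ((0, m') : ZMod p × ZMod q)
    rw [hdec] at this
    simpa using this
  · intro m
    ext
    simpa using s_pow (0, m)
  · intro a b
    have hl : lam a b = (s a * b.1, b.2) := by
      rw [show b = (b.1, b.2) from rfl, scaling, t_triv, one_mul]
    rw [lam_def a b, hl]
    ext <;> simp [← s_snd a]

lemma exists_pow_eq' {p q : ℕ} [Fact p.Prime] (hq : q.Prime) (h h' : (ZMod p)ˣ)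
    (hh1 : h ≠ 1) (hhq : h ^ q = 1) (hh'q : h' ^ q = 1) : ∃ i, i < q ∧ h ^ i = h' := by
  classical
  have hord : orderOf h = q := by
    rcases (Nat.Prime.eq_one_or_self_of_dvd hq _
      (orderOf_dvd_iff_pow_eq_one.mpr hhq)) with h1 | h1
    · exact absurd (orderOf_eq_one_iff.mp h1) hh1
    · exact h1
  set F := Finset.filter (fun a : (ZMod p)ˣ => a ^ q = 1) Finset.univ with hF
  have hFc : F.card ≤ q := IsCyclic.card_pow_eq_one_le hq.pos
  set S := (Finset.range q).image (h ^ ·) with hS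
  have hSF : S ⊆ F := by
    intro x hx
    simp only [hS, Finset.mem_image, Finset.mem_range] at hx
    obtain ⟨i, hi, rfl⟩ := hx
    simp only [hF, Finset.mem_filter, Finset.mem_univ, true_and]
    rw [← pow_mul, mul_comm, pow_mul, hhq, one_pow]
  have hcS : S.card = q := by
    rw [hS, Finset.card_image_of_injOn, Finset.card_range]
    intro i hi j hj hij
    refine pow_injOn_Iio_orderOf ?_ ?_ hij <;>
      · simp only [Finset.coe_range, Set.mem_Iio] at *
        omega
  have hSFeq : S = F := Finset.eq_of_subset_of_card_le hSF (by omega)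
  have hx : h' ∈ F := by simp [hF, hh'q]
  rw [← hSFeq] at hx
  simp only [hS, Finset.mem_image, Finset.mem_range] at hx
  obtain ⟨i, hi, hie⟩ := hx
  exact ⟨i, hi, hie⟩

lemma hom_natCast {p q : ℕ} [NeZero q] (H : ZMod q → (ZMod p)ˣ)
    (hH : ∀ m m', H (m + m') = H m * H m') (n : ℕ) : H (n : ZMod q) = H 1 ^ n := by
  have h0 : H 0 = 1 := by
    have h := hH 0 0
    rw [add_zero] at h
    exact left_eq_mul.mp h
  induction n with
  | zero => simpa using h0
  | succ k ih => push_cast; rw [hH, ih, pow_succ]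

lemma braceIso (p q : ℕ) (hp : p.Prime) (hq : q.Prime)
    (H H' : ZMod q → (ZMod p)ˣ)
    (hH : ∀ m m', H (m + m') = H m * H m') (hH' : ∀ m m', H' (m + m') = H' m * H' m')
    (hHq : ∀ m, H m ^ q = 1) (hH'q : ∀ m, H' m ^ q = 1)
    (hnt : ∃ m, H m ≠ 1) (hnt' : ∃ m, H' m ≠ 1) :
    ∃ ψ : (ZMod p × ZMod q) ≃ (ZMod p × ZMod q),
      (∀ a b, ψ (a + b) = ψ a + ψ b) ∧
      ∀ a b : ZMod p × ZMod q,
        ψ (a.1 + (H a.2 : ZMod p) * b.1, a.2 + b.2)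
          = ((ψ a).1 + (H' (ψ a).2 : ZMod p) * (ψ b).1, (ψ a).2 + (ψ b).2) := by
  haveI : Fact p.Prime := ⟨hp⟩
  haveI : Fact q.Prime := ⟨hq⟩
  have hcast : ∀ m : ZMod q, ((m.val : ℕ) : ZMod q) = m := by
    intro m; simp [ZMod.natCast_val, ZMod.cast_id]
  have h1ne : H 1 ≠ 1 := by
    intro hcon
    obtain ⟨m, hm⟩ := hnt
    exact hm (by rw [← hcast m, hom_natCast H hH, hcon, one_pow])
  have h1ne' : H' 1 ≠ 1 := by
    intro hcon
    obtain ⟨m, hm⟩ := hnt'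
    exact hm (by rw [← hcast m, hom_natCast H' hH', hcon, one_pow])
  obtain ⟨i, hi, hie⟩ := exists_pow_eq' hq (H' 1) (H 1) h1ne' (hH'q 1) (hHq 1)
  have hi0 : i ≠ 0 := by
    intro hcon; rw [hcon, pow_zero] at hie; exact h1ne hie.symm
  set c : ZMod q := (i : ZMod q) with hc
  have hcne : c ≠ 0 := by
    intro hcon
    exact Nat.not_dvd_of_pos_of_lt (Nat.pos_of_ne_zero hi0) hi
      ((ZMod.natCast_eq_zero_iff i q).mp hcon)
  have key : ∀ m : ZMod q, H' (c * m) = H m := by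
    intro m
    have : c * m = ((i * m.val : ℕ) : ZMod q) := by
      push_cast
      rw [hcast m, hc]
    rw [this, hom_natCast H' hH', pow_mul, hie, ← hom_natCast H hH, hcast]
  refine ⟨⟨fun a => (a.1, c * a.2), fun a => (a.1, c⁻¹ * a.2),
    fun a => by simp [inv_mul_cancel_left₀ hcne],
    fun a => by simp [mul_inv_cancel_left₀ hcne]⟩, ?_, ?_⟩
  · intro a b; ext <;> simp [mul_add]
  · intro a b
    ext <;> simp [key, mul_add]

lemma isSkewBrace_transport2 {A B : Type*} (E : A ≃ B) {add : A → A → A} {zero : A}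
    {neg : A → A} {mul : A → A → A} {one : A} {inv : A → A}
    (h : IsSkewBrace add zero neg mul one inv) :
    IsSkewBrace (fun x y => E (add (E.symm x) (E.symm y))) (E zero)
      (fun x => E (neg (E.symm x))) (fun x y => E (mul (E.symm x) (E.symm y))) (E one)
      (fun x => E (inv (E.symm x))) := by
  obtain ⟨⟨a1,a2,a3,a4,a5⟩,⟨m1,m2,m3,m4,m5⟩,c⟩ := h
  refine ⟨⟨?_,?_,?_,?_,?_⟩,⟨?_,?_,?_,?_,?_⟩,?_⟩ <;> intros <;>
    simp [a1,a2,a3,a4,a5,m1,m2,m3,m4,m5,c]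

lemma isSkewBrace_std2 {A : Type*} [AddCommGroup A] {z : A} {n : A → A}
    {mul : A → A → A} {one : A} {inv : A → A}
    (h : IsSkewBrace (· + ·) z n mul one inv) :
    IsSkewBrace (· + ·) 0 (- ·) mul one inv := by
  obtain ⟨⟨-, -, h3, h4, -⟩, hm, hc⟩ := h
  have hz : z = 0 := by simpa using h3 0
  have hn : ∀ a, n a = -a := fun a => by
    have h := h4 a; rw [hz] at h; exact eq_neg_of_add_eq_zero_left h
  refine ⟨⟨fun a b c => add_assoc a b c, zero_add, add_zero, neg_add_cancel,
    add_neg_cancel⟩, hm, ?_⟩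
  intro a b c
  have := hc a b c
  rwa [hn a] at this

lemma transport_std {A B : Type*} [AddCommGroup B] (E : A ≃ B)
    {add : A → A → A} {zero : A} {neg : A → A} {mul : A → A → A} {one : A} {inv : A → A}
    (hsb : IsSkewBrace add zero neg mul one inv)
    (hE : ∀ a b, E (add a b) = E a + E b) :
    IsSkewBrace (· + ·) (0 : B) (- ·)
      (fun x y => E (mul (E.symm x) (E.symm y))) (E one) (fun x => E (inv (E.symm x))) := by
  have h := isSkewBrace_transport2 E hsb
  have hadd : (fun x y => E (add (E.symm x) (E.symm y))) = (fun x y : B => x + y) := by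
    funext x y; rw [hE]; simp
  rw [hadd] at h
  exact isSkewBrace_std2 h

lemma semidirectBrace (p q : ℕ) (G : ZMod q → ZMod p)
    (hG : ∀ m m', G (m + m') = G m * G m') (h0 : G 0 = 1) :
    IsSkewBrace (· + ·) (0 : ZMod p × ZMod q) (- ·)
      (fun a b => (a.1 + G a.2 * b.1, a.2 + b.2)) 0
      (fun a => (-(G (-a.2) * a.1), -a.2)) := by
  have hinv : ∀ m, G m * G (-m) = 1 := fun m => by rw [← hG]; simp [h0]
  refine ⟨⟨fun a b c => add_assoc a b c, zero_add, add_zero, neg_add_cancel,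
    add_neg_cancel⟩, ⟨?_, ?_, ?_, ?_, ?_⟩, ?_⟩
  · intro a b c
    ext
    · show (a.1 + G a.2 * b.1) + G (a.2 + b.2) * c.1 = a.1 + G a.2 * (b.1 + G b.2 * c.1)
      rw [hG]; ring
    · show a.2 + b.2 + c.2 = a.2 + (b.2 + c.2)
      ring
  · intro a; ext <;> simp [h0]
  · intro a; ext <;> simp
  · intro a
    ext
    · show -(G (-a.2) * a.1) + G (-a.2) * a.1 = (0 : ZMod p)
      ring
    · show -a.2 + a.2 = (0 : ZMod q)
      ring
  · intro a
    ext
    · show a.1 + G a.2 * -(G (-a.2) * a.1) = (0 : ZMod p)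
      linear_combination (-a.1) * hinv a.2
    · show a.2 + -a.2 = (0 : ZMod q)
      ring
  · intro a b c
    ext
    · show a.1 + G a.2 * (b.1 + c.1) = ((a.1 + G a.2 * b.1) + -a.1) + (a.1 + G a.2 * c.1)
      ring
    · show a.2 + (b.2 + c.2) = ((a.2 + b.2) + -a.2) + (a.2 + c.2)
      ring

lemma uniqP (p q : ℕ) (hp : p.Prime) (hq : q.Prime) (hlt : q < p) (hmod : p % q = 1)
    {mul₁ : ZMod p × ZMod q → ZMod p × ZMod q → ZMod p × ZMod q} {one₁ inv₁}
    (hsb₁ : IsSkewBrace (· + ·) 0 (- ·) mul₁ one₁ inv₁)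
    (hnt₁ : ∃ a b, mul₁ a b ≠ a + b)
    {mul₂ : ZMod p × ZMod q → ZMod p × ZMod q → ZMod p × ZMod q} {one₂ inv₂}
    (hsb₂ : IsSkewBrace (· + ·) 0 (- ·) mul₂ one₂ inv₂)
    (hnt₂ : ∃ a b, mul₂ a b ≠ a + b) :
    ∃ ψ : (ZMod p × ZMod q) ≃ (ZMod p × ZMod q),
      (∀ a b, ψ (a + b) = ψ a + ψ b) ∧ ∀ a b, ψ (mul₁ a b) = mul₂ (ψ a) (ψ b) := by
  obtain ⟨H₁, hH₁0, hH₁hom, hH₁q, hform₁⟩ := classify p q hp hq hlt hmod hsb₁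
  obtain ⟨H₂, hH₂0, hH₂hom, hH₂q, hform₂⟩ := classify p q hp hq hlt hmod hsb₂
  have hne₁ : ∃ m, H₁ m ≠ 1 := by
    by_contra hcon
    push_neg at hcon
    obtain ⟨a, b, hab⟩ := hnt₁
    exact hab (by rw [hform₁]; ext <;> simp [hcon a.2])
  have hne₂ : ∃ m, H₂ m ≠ 1 := by
    by_contra hcon
    push_neg at hcon
    obtain ⟨a, b, hab⟩ := hnt₂
    exact hab (by rw [hform₂]; ext <;> simp [hcon a.2])
  obtain ⟨ψ, hψadd, hψmul⟩ :=
    braceIso p q hp hq H₁ H₂ hH₁hom hH₂hom hH₁q hH₂q hne₁ hne₂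
  exact ⟨ψ, hψadd, fun a b => by rw [hform₁ a b, hψmul a b, ← hform₂ (ψ a) (ψ b)]⟩

/-- All the regular subgroups `G_b = ⟨σ, τ^b α⟩` (`1 ≤ b ≤ q-1`) of `Hol(C)` are
conjugate under `Aut(C)`; consequently, there is exactly one non-trivial skew brace
with cyclic additive group of order `pq` up to isomorphism. -/
theorem stmt13 (p q : ℕ) (hp : p.Prime) (hq : q.Prime) (hlt : q < p)
    (hmod : p % q = 1) (g : (ZMod p)ˣ) (hg : orderOf g = q) :
    (∀ b b' : ℕ, 1 ≤ b → b ≤ q - 1 → 1 ≤ b' → b' ≤ q - 1 →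
      ∃ f : (ZMod p × ZMod q) ≃+ (ZMod p × ZMod q),
        Subgroup.map
          (MulAut.conj (f.toEquiv : Equiv.Perm (ZMod p × ZMod q))).toMonoidHom
          (Gb p q g b) = Gb p q g b') ∧
    -- existence of a non-trivial skew brace with cyclic additive group of order `pq`
    (∃ (mul : ZMod (p * q) → ZMod (p * q) → ZMod (p * q)) (one : ZMod (p * q))
        (inv : ZMod (p * q) → ZMod (p * q)),
      IsSkewBrace (· + ·) 0 (- ·) mul one inv ∧ ∃ a b, mul a b ≠ a + b) ∧
    -- uniqueness: any two non-trivial skew braces with cyclic additive group of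
    -- order `pq` are isomorphic
    (∀ (A₁ A₂ : Type) (add₁ : A₁ → A₁ → A₁) (zero₁ : A₁) (neg₁ : A₁ → A₁)
        (mul₁ : A₁ → A₁ → A₁) (one₁ : A₁) (inv₁ : A₁ → A₁)
        (add₂ : A₂ → A₂ → A₂) (zero₂ : A₂) (neg₂ : A₂ → A₂)
        (mul₂ : A₂ → A₂ → A₂) (one₂ : A₂) (inv₂ : A₂ → A₂),
      IsSkewBrace add₁ zero₁ neg₁ mul₁ one₁ inv₁ →
      IsSkewBrace add₂ zero₂ neg₂ mul₂ one₂ inv₂ →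
      (∃ e : A₁ ≃ ZMod (p * q), ∀ a b, e (add₁ a b) = e a + e b) →
      (∃ e : A₂ ≃ ZMod (p * q), ∀ a b, e (add₂ a b) = e a + e b) →
      (∃ a b, mul₁ a b ≠ add₁ a b) → (∃ a b, mul₂ a b ≠ add₂ a b) →
      ∃ e : A₁ ≃ A₂, (∀ a b, e (add₁ a b) = add₂ (e a) (e b)) ∧
        (∀ a b, e (mul₁ a b) = mul₂ (e a) (e b))) := by
  haveI : Fact p.Prime := ⟨hp⟩
  haveI : Fact q.Prime := ⟨hq⟩
  have hq2 : 2 ≤ q := hq.two_le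
  have cop : Nat.Coprime p q := (Nat.coprime_primes hp hq).mpr (ne_of_gt hlt)
  set χ := ZMod.chineseRemainder cop with hχ
  -- the canonical non-trivial skew brace on `ZMod p × ZMod q`
  set G : ZMod q → ZMod p := fun m => ((g ^ m.val : (ZMod p)ˣ) : ZMod p) with hGdef
  have hGhom : ∀ m m', G (m + m') = G m * G m' := by
    intro m m'
    have hu : g ^ (m + m').val = g ^ m.val * g ^ m'.val := by
      rw [ZMod.val_add]
      have hmo : (m.val + m'.val) % q = (m.val + m'.val) % orderOf g := by rw [hg]
      rw [hmo, pow_mod_orderOf, pow_add]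
    simp only [hGdef]
    rw [hu, Units.val_mul]
  have hG0 : G 0 = 1 := by simp [hGdef, ZMod.val_zero]
  have hbrP := semidirectBrace p q G hGhom hG0
  have hntP : (fun (a b : ZMod p × ZMod q) => (a.1 + G a.2 * b.1, a.2 + b.2))
      ((0 : ZMod p), (1 : ZMod q)) ((1 : ZMod p), (0 : ZMod q))
      ≠ ((0 : ZMod p), (1 : ZMod q)) + ((1 : ZMod p), (0 : ZMod q)) := by
    intro hcon
    have h1 : G 1 = 1 := by
      have := congrArg Prod.fst hcon
      simpa using this
    have : (g : ZMod p) = 1 := by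
      have hval : (1 : ZMod q).val = 1 := ZMod.val_one q
      simpa [hGdef, hval] using h1
    have : g = 1 := Units.ext (by simpa using this)
    rw [this, orderOf_one] at hg
    omega
  refine ⟨?_, ?_, ?_⟩
  · -- Part 1: conjugacy of the subgroups G_b
    intro b b' hb1 hb2 hb'1 hb'2
    have hbne : ((b : ZMod q)) ≠ 0 := fun h =>
      Nat.not_dvd_of_pos_of_lt (by omega) (by omega) ((ZMod.natCast_eq_zero_iff b q).mp h)
    have hb'ne : ((b' : ZMod q)) ≠ 0 := fun h =>
      Nat.not_dvd_of_pos_of_lt (by omega) (by omega) ((ZMod.natCast_eq_zero_iff b' q).mp h)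
    set c : ZMod q := (b' : ZMod q) * (b : ZMod q)⁻¹ with hc
    have hcb : c * (b : ZMod q) = (b' : ZMod q) := by
      rw [hc, mul_assoc, inv_mul_cancel₀ hbne, mul_one]
    have hcne : c ≠ 0 := by
      intro h
      rw [h, zero_mul] at hcb
      exact hb'ne hcb.symm
    set f : (ZMod p × ZMod q) ≃+ (ZMod p × ZMod q) :=
      { toFun := fun a => (a.1, c * a.2)
        invFun := fun a => (a.1, c⁻¹ * a.2)
        left_inv := fun a => by ext <;> (simp [inv_mul_cancel_left₀ hcne])
        right_inv := fun a => by ext <;> (simp [mul_inv_cancel_left₀ hcne])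
        map_add' := fun a b => by ext <;> (simp [mul_add]) } with hf
    refine ⟨f, ?_⟩
    set F : Equiv.Perm (ZMod p × ZMod q) := (f.toEquiv : Equiv.Perm (ZMod p × ZMod q)) with hF
    have hconj1 : (MulAut.conj F) (Equiv.addLeft ((1, 0) : ZMod p × ZMod q))
        = Equiv.addLeft ((1, 0) : ZMod p × ZMod q) := by
      refine Equiv.ext fun z => ?_
      simp only [MulAut.conj_apply, Equiv.Perm.mul_apply]
      simp [hF, hf, Equiv.Perm.inv_def, Prod.ext_iff, mul_inv_cancel_left₀ hcne]
    have hτpow : ∀ k : ℕ, (Equiv.addLeft ((0, 1) : ZMod p × ZMod q)) ^ k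
        = Equiv.addLeft (((0 : ZMod p), (k : ZMod q))) := by
      intro k
      rw [addLeft_pow]
      congr 1
      ext <;> simp [nsmul_eq_mul]
    have hconj2 : (MulAut.conj F)
        ((Equiv.addLeft ((0, 1) : ZMod p × ZMod q)) ^ b *
          Equiv.prodCongr (Units.mulLeft g) (Equiv.refl (ZMod q)))
        = (Equiv.addLeft ((0, 1) : ZMod p × ZMod q)) ^ b' *
          Equiv.prodCongr (Units.mulLeft g) (Equiv.refl (ZMod q)) := by
      rw [hτpow b, hτpow b']
      refine Equiv.ext fun z => ?_
      simp only [MulAut.conj_apply, Equiv.Perm.mul_apply]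
      simp [hF, hf, Equiv.Perm.inv_def, mul_add, mul_inv_cancel_left₀ hcne, hcb, Prod.ext_iff,
        Prod.map]
    rw [Gb, Gb, MonoidHom.map_closure]
    congr 1
    rw [Set.image_insert_eq, Set.image_singleton]
    show {(MulAut.conj F) _, (MulAut.conj F) _} = _
    rw [hconj1, hconj2]
  · -- Part 2: existence of a non-trivial skew brace on `ZMod (p*q)`
    set E : (ZMod p × ZMod q) ≃ ZMod (p * q) := χ.toEquiv.symm with hE
    have hEadd : ∀ a b : ZMod p × ZMod q, E (a + b) = E a + E b := by
      intro a b
      show χ.symm (a + b) = χ.symm a + χ.symm b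
      exact map_add χ.symm a b
    have hEsymm : ∀ x, E.symm x = χ x := fun x => rfl
    have h := transport_std E hbrP hEadd
    refine ⟨_, _, _, h, E ((0 : ZMod p), (1 : ZMod q)), E ((1 : ZMod p), (0 : ZMod q)), ?_⟩
    intro hcon
    apply hntP
    have h1 : E.symm (E ((0 : ZMod p), (1 : ZMod q))) = ((0 : ZMod p), (1 : ZMod q)) :=
      E.symm_apply_apply _
    have h2 : E.symm (E ((1 : ZMod p), (0 : ZMod q))) = ((1 : ZMod p), (0 : ZMod q)) :=
      E.symm_apply_apply _
    rw [h1, h2, ← hEadd] at hcon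
    exact E.injective hcon
  · -- Part 3: uniqueness
    intro A₁ A₂ add₁ zero₁ neg₁ mul₁ one₁ inv₁ add₂ zero₂ neg₂ mul₂ one₂ inv₂
      hsb₁ hsb₂ he₁ he₂ hnt₁ hnt₂
    obtain ⟨e₁, he₁⟩ := he₁
    obtain ⟨e₂, he₂⟩ := he₂
    set E₁ : A₁ ≃ (ZMod p × ZMod q) := e₁.trans χ.toEquiv with hE₁
    set E₂ : A₂ ≃ (ZMod p × ZMod q) := e₂.trans χ.toEquiv with hE₂
    have hE₁add : ∀ a b, E₁ (add₁ a b) = E₁ a + E₁ b := by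
      intro a b
      show χ (e₁ (add₁ a b)) = χ (e₁ a) + χ (e₁ b)
      rw [he₁, map_add]
    have hE₂add : ∀ a b, E₂ (add₂ a b) = E₂ a + E₂ b := by
      intro a b
      show χ (e₂ (add₂ a b)) = χ (e₂ a) + χ (e₂ b)
      rw [he₂, map_add]
    have hbr₁ := transport_std E₁ hsb₁ hE₁add
    have hbr₂ := transport_std E₂ hsb₂ hE₂add
    have hntP₁ : ∃ a b : ZMod p × ZMod q,
        E₁ (mul₁ (E₁.symm a) (E₁.symm b)) ≠ a + b := by
      obtain ⟨a, b, hab⟩ := hnt₁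
      refine ⟨E₁ a, E₁ b, ?_⟩
      rw [E₁.symm_apply_apply, E₁.symm_apply_apply, ← hE₁add]
      exact fun hcon => hab (E₁.injective hcon)
    have hntP₂ : ∃ a b : ZMod p × ZMod q,
        E₂ (mul₂ (E₂.symm a) (E₂.symm b)) ≠ a + b := by
      obtain ⟨a, b, hab⟩ := hnt₂
      refine ⟨E₂ a, E₂ b, ?_⟩
      rw [E₂.symm_apply_apply, E₂.symm_apply_apply, ← hE₂add]
      exact fun hcon => hab (E₂.injective hcon)
    obtain ⟨ψ, hψadd, hψmul⟩ := uniqP p q hp hq hlt hmod hbr₁ hntP₁ hbr₂ hntP₂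
    refine ⟨(E₁.trans ψ).trans E₂.symm, ?_, ?_⟩
    · intro a b
      show E₂.symm (ψ (E₁ (add₁ a b))) = add₂ (E₂.symm (ψ (E₁ a))) (E₂.symm (ψ (E₁ b)))
      rw [hE₁add, hψadd]
      apply E₂.injective
      rw [E₂.apply_symm_apply, hE₂add, E₂.apply_symm_apply, E₂.apply_symm_apply]
    · intro a b
      show E₂.symm (ψ (E₁ (mul₁ a b))) = mul₂ (E₂.symm (ψ (E₁ a))) (E₂.symm (ψ (E₁ b)))
      have h1 : E₁ (mul₁ a b)
          = E₁ (mul₁ (E₁.symm (E₁ a)) (E₁.symm (E₁ b))) := by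
        rw [E₁.symm_apply_apply, E₁.symm_apply_apply]
      rw [h1, hψmul]
      rw [E₂.symm_apply_apply]
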